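/- Every tangent vector to the root-type stratum {8} at the point v = (gx+hy)^8, namely every polynomial of the form 8(Gx+Hy)(gx+hy)^7, lies in the column space of the matrix J(v); explicitly, for v = (gx+hy)^8, columns 6 through 9 of J(v) (the λ, φ_{-2}, φ_0, φ_2 columns) each equal 8(Gx+Hy)(gx+hy)^7 for appropriate choices of (G,H), while columns 1–5 vanish. -/

import Mathlib

noncomputable section

variable {K : Type*} [CommRing K]

/-- The ω⁻⁴ column of J (common factor 9216 removed), from Appendix A. -/
def c0 (t : Fin 9 → K) : Fin 9 → K :=
  ![280*t 0*t 6 - 280*t 1*t 5,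
    -245*t 2*t 5 + 70*t 0*t 7 + 175*t 1*t 6,
    70*t 2*t 6 - 210*t 3*t 5 + 130*t 1*t 7 + 10*t 0*t 8,
    -175*t 4*t 5 - 35*t 3*t 6 + 35*t 1*t 8 + 175*t 2*t 7,
    84*t 2*t 8 + 196*t 3*t 7 - 140*t 5^2 - 140*t 4*t 6,
    -350*t 5*t 6 + 175*t 4*t 7 + 175*t 3*t 8,
    350*t 4*t 8 - 350*t 6^2,
    700*t 5*t 8 - 700*t 7*t 6,
    -1400*t 7^2 + 1400*t 8*t 6]

/-- The ω⁻² column of J (common factor 9216 removed). -/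
def c1 (t : Fin 9 → K) : Fin 9 → K :=
  ![-1400*t 0*t 5 + 1400*t 1*t 4,
    -385*t 0*t 6 - 840*t 1*t 5 + 1225*t 2*t 4,
    -280*t 2*t 5 + 1050*t 3*t 4 - 70*t 0*t 7 - 700*t 1*t 6,
    -910*t 2*t 6 + 280*t 3*t 5 + 875*t 4^2 - 240*t 1*t 7 - 5*t 0*t 8,
    1540*t 4*t 5 - 952*t 3*t 6 - 28*t 1*t 8 - 560*t 2*t 7,
    -105*t 2*t 8 - 1120*t 3*t 7 + 1400*t 5^2 - 175*t 4*t 6,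
    2100*t 5*t 6 - 1750*t 4*t 7 - 350*t 3*t 8,
    2450*t 6^2 - 1050*t 4*t 8 - 1400*t 5*t 7,
    -2800*t 5*t 8 + 2800*t 7*t 6]

/-- The ω⁰ column of J (common factor 9216 removed). -/
def c2 (t : Fin 9 → K) : Fin 9 → K :=
  ![-2800*t 1*t 3 + 2800*t 0*t 4,
    -2450*t 2*t 3 + 875*t 0*t 5 + 1575*t 1*t 4,
    210*t 0*t 6 - 2100*t 3^2 + 1540*t 1*t 5 + 350*t 2*t 4,
    1890*t 2*t 5 - 2625*t 3*t 4 + 35*t 0*t 7 + 700*t 1*t 6,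
    1568*t 2*t 6 + 336*t 3*t 5 - 2100*t 4^2 + 192*t 1*t 7 + 4*t 0*t 8,
    -2625*t 4*t 5 + 1890*t 3*t 6 + 35*t 1*t 8 + 700*t 2*t 7,
    210*t 2*t 8 + 1540*t 3*t 7 - 2100*t 5^2 + 350*t 4*t 6,
    -2450*t 5*t 6 + 1575*t 4*t 7 + 875*t 3*t 8,
    2800*t 4*t 8 - 2800*t 5*t 7]

/-- The ω² column of J (common factor 9216 removed). -/
def c3 (t : Fin 9 → K) : Fin 9 → K :=
  ![2800*t 2*t 1 - 2800*t 3*t 0,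
    -1400*t 1*t 3 - 1050*t 0*t 4 + 2450*t 2^2,
    2100*t 2*t 3 - 350*t 0*t 5 - 1750*t 1*t 4,
    -105*t 0*t 6 + 1400*t 3^2 - 1120*t 1*t 5 - 175*t 2*t 4,
    -952*t 2*t 5 + 1540*t 3*t 4 - 28*t 0*t 7 - 560*t 1*t 6,
    -910*t 2*t 6 + 280*t 3*t 5 + 875*t 4^2 - 240*t 1*t 7 - 5*t 0*t 8,
    1050*t 4*t 5 - 280*t 3*t 6 - 70*t 1*t 8 - 700*t 2*t 7,
    1225*t 4*t 6 - 385*t 2*t 8 - 840*t 3*t 7,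
    1400*t 4*t 7 - 1400*t 3*t 8]

/-- The ω⁴ column of J (common factor 9216 removed). -/
def c4 (t : Fin 9 → K) : Fin 9 → K :=
  ![1400*t 2*t 0 - 1400*t 1^2,
    -700*t 2*t 1 + 700*t 3*t 0,
    -350*t 2^2 + 350*t 0*t 4,
    -350*t 2*t 3 + 175*t 0*t 5 + 175*t 1*t 4,
    84*t 0*t 6 - 140*t 3^2 + 196*t 1*t 5 - 140*t 2*t 4,
    -35*t 2*t 5 - 175*t 3*t 4 + 35*t 0*t 7 + 175*t 1*t 6,
    70*t 2*t 6 - 210*t 3*t 5 + 130*t 1*t 7 + 10*t 0*t 8,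
    70*t 1*t 8 - 245*t 3*t 6 + 175*t 2*t 7,
    -280*t 3*t 7 + 280*t 2*t 8]

/-- The λ column of J. -/
def c5 (t : Fin 9 → K) : Fin 9 → K := t

/-- The φ₋₂ column of J. -/
def c6 (t : Fin 9 → K) : Fin 9 → K :=
  ![-16*t 1, -14*t 2, -12*t 3, -10*t 4, -8*t 5, -6*t 6, -4*t 7, -2*t 8, 0]

/-- The φ₀ column of J. -/
def c7 (t : Fin 9 → K) : Fin 9 → K :=
  ![16*t 0, 12*t 1, 8*t 2, 4*t 3, 0, -4*t 5, -8*t 6, -12*t 7, -16*t 8]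

/-- The φ₂ column of J. -/
def c8 (t : Fin 9 → K) : Fin 9 → K :=
  ![0, 2*t 0, 4*t 1, 6*t 2, 8*t 3, 10*t 4, 12*t 5, 14*t 6, 16*t 7]

/-- The 9×9 matrix J(T) from Appendix A of the paper (the factor 9216 = 2¹⁰3²
is restored on the five ω-columns). -/
def Jmat (t : Fin 9 → K) : Matrix (Fin 9) (Fin 9) K :=
  Matrix.of fun i j =>
    (![fun i' => (9216 : K) * c0 t i', fun i' => (9216 : K) * c1 t i',
       fun i' => (9216 : K) * c2 t i', fun i' => (9216 : K) * c3 t i',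
       fun i' => (9216 : K) * c4 t i',
       c5 t, c6 t, c7 t, c8 t] j) i

/-- The coefficient vector (binomial basis) of (gx+hy)⁸. -/
def pow8Vec (g h : ℝ) : Fin 9 → ℝ := fun k =>
  g ^ (8 - (k : ℕ)) * h ^ (k : ℕ)

/-- The coefficient vector (binomial basis) of 8(Gx+Hy)(gx+hy)⁷. -/
def tvec (g h G H : ℝ) : Fin 9 → ℝ := fun k =>
  (8 - (k : ℕ)) * G * g ^ (7 - (k : ℕ)) * h ^ (k : ℕ)
    + (k : ℕ) * H * g ^ (8 - (k : ℕ)) * h ^ ((k : ℕ) - 1)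

section Helpers

lemma fv3 : ((3:Fin 9):ℕ) = 3 := rfl
lemma fv4 : ((4:Fin 9):ℕ) = 4 := rfl
lemma fv5 : ((5:Fin 9):ℕ) = 5 := rfl
lemma fv6 : ((6:Fin 9):ℕ) = 6 := rfl
lemma fv7 : ((7:Fin 9):ℕ) = 7 := rfl
lemma fv8 : ((8:Fin 9):ℕ) = 8 := rfl

variable {α : Type*}

lemma cv2 (x0 x1 x2 x3 x4 x5 x6 x7 x8 : α) :
    ![x0,x1,x2,x3,x4,x5,x6,x7,x8] (2:Fin 9) = x2 := rfl
lemma cv3 (x0 x1 x2 x3 x4 x5 x6 x7 x8 : α) :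
    ![x0,x1,x2,x3,x4,x5,x6,x7,x8] (3:Fin 9) = x3 := rfl
lemma cv4 (x0 x1 x2 x3 x4 x5 x6 x7 x8 : α) :
    ![x0,x1,x2,x3,x4,x5,x6,x7,x8] (4:Fin 9) = x4 := rfl
lemma cv5 (x0 x1 x2 x3 x4 x5 x6 x7 x8 : α) :
    ![x0,x1,x2,x3,x4,x5,x6,x7,x8] (5:Fin 9) = x5 := rfl
lemma cv6 (x0 x1 x2 x3 x4 x5 x6 x7 x8 : α) :
    ![x0,x1,x2,x3,x4,x5,x6,x7,x8] (6:Fin 9) = x6 := rfl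
lemma cv7 (x0 x1 x2 x3 x4 x5 x6 x7 x8 : α) :
    ![x0,x1,x2,x3,x4,x5,x6,x7,x8] (7:Fin 9) = x7 := rfl
lemma cv8 (x0 x1 x2 x3 x4 x5 x6 x7 x8 : α) :
    ![x0,x1,x2,x3,x4,x5,x6,x7,x8] (8:Fin 9) = x8 := rfl

end Helpers

lemma pow8Vec_eq (g h : ℝ) : pow8Vec g h =
    ![g^8, g^7*h, g^6*h^2, g^5*h^3, g^4*h^4, g^3*h^5, g^2*h^6, g*h^7, h^8] := by
  funext k; fin_cases k <;> norm_num [pow8Vec, fv3, fv4, fv5, fv6, fv7, fv8]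

lemma tvec_eq (g h G H : ℝ) : tvec g h G H =
    ![8*G*g^7, 7*G*g^6*h + H*g^7, 6*G*g^5*h^2 + 2*H*g^6*h,
      5*G*g^4*h^3 + 3*H*g^5*h^2, 4*G*g^3*h^4 + 4*H*g^4*h^3,
      3*G*g^2*h^5 + 5*H*g^3*h^4, 2*G*g*h^6 + 6*H*g^2*h^5,
      G*h^7 + 7*H*g*h^6, 8*H*h^7] := by
  funext k
  fin_cases k <;> (norm_num [tvec, fv3, fv4, fv5, fv6, fv7, fv8]; try ring)

set_option maxHeartbeats 1000000 in
lemma mulVec_cols (t : Fin 9 → K) (α β γ : K) :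
    (Jmat t).mulVec ![0,0,0,0,0,0,α,β,γ]
      = fun i => α * c6 t i + β * c7 t i + γ * c8 t i := by
  funext i
  simp [Jmat, Matrix.mulVec, dotProduct, Fin.sum_univ_succ,
    cv5, cv6, cv7, cv8]
  ring

set_option maxHeartbeats 1000000 in
lemma cols_tvec (g h α β γ : ℝ) :
    (fun i => α * c6 (pow8Vec g h) i + β * c7 (pow8Vec g h) i
        + γ * c8 (pow8Vec g h) i)
      = tvec g h (-2*h*α + 2*g*β) (-2*h*β + 2*g*γ) := by
  funext k
  fin_cases k <;>
    (simp [c6, c7, c8, pow8Vec_eq, tvec_eq, Matrix.cons_val_succ',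
       cv5, cv6, cv7, cv8]; ring)

lemma key (g h α β γ : ℝ) :
    (Jmat (pow8Vec g h)).mulVec ![0,0,0,0,0,0,α,β,γ]
      = tvec g h (-2*h*α + 2*g*β) (-2*h*β + 2*g*γ) := by
  rw [mulVec_cols, cols_tvec]

set_option maxHeartbeats 2000000 in
/-- at v = (gx+hy)⁸, the first five (ω-)columns of J(v) vanish,
columns 6–9 (the λ, φ₋₂, φ₀, φ₂ columns) each equal 8(Gx+Hy)(gx+hy)⁷ for
appropriate (G,H), and every tangent vector 8(Gx+Hy)(gx+hy)⁷ to the root-type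
stratum {8} lies in the column space of J(v). -/
theorem tangent_space_in_column_space (g h : ℝ) (hgh : ¬(g = 0 ∧ h = 0)) :
    (∀ a : Fin 9, (a : ℕ) < 5 → ∀ i : Fin 9, Jmat (pow8Vec g h) i a = 0) ∧
    (∀ a : Fin 9, 5 ≤ (a : ℕ) →
      ∃ G H : ℝ, (fun i => Jmat (pow8Vec g h) i a) = tvec g h G H) ∧
    (∀ G H : ℝ, tvec g h G H ∈ LinearMap.range (Jmat (pow8Vec g h)).mulVecLin) := by
  refine ⟨?_, ?_, ?_⟩
  · intro a ha i
    fin_cases a <;> simp only [Fin.val] at ha <;> try omega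
    all_goals
      fin_cases i <;>
        (simp [Jmat, c0, c1, c2, c3, c4, pow8Vec_eq, Matrix.cons_val_succ',
           cv5, cv6, cv7, cv8]; ring)
  · intro a ha
    fin_cases a <;> simp only [Fin.val] at ha <;> try omega
    · refine ⟨g/8, h/8, ?_⟩
      show pow8Vec g h = tvec g h (g/8) (h/8)
      rw [pow8Vec_eq, tvec_eq]
      funext k
      fin_cases k <;> (norm_num [Matrix.cons_val_succ']; try ring)
    · refine ⟨-2*h, 0, ?_⟩
      show c6 (pow8Vec g h) = tvec g h (-2*h) 0
      simp only [c6, pow8Vec_eq, tvec_eq, cv2, cv3, cv4, cv5, cv6, cv7, cv8]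
      funext k
      fin_cases k <;> (norm_num [Matrix.cons_val_succ']; try ring)
    · refine ⟨2*g, -2*h, ?_⟩
      show c7 (pow8Vec g h) = tvec g h (2*g) (-2*h)
      simp only [c7, pow8Vec_eq, tvec_eq, cv2, cv3, cv4, cv5, cv6, cv7, cv8]
      funext k
      fin_cases k <;> (norm_num [Matrix.cons_val_succ']; try ring)
    · refine ⟨0, 2*g, ?_⟩
      show c8 (pow8Vec g h) = tvec g h 0 (2*g)
      simp only [c8, pow8Vec_eq, tvec_eq, cv2, cv3, cv4, cv5, cv6, cv7, cv8]
      funext k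
      fin_cases k <;> (norm_num [Matrix.cons_val_succ']; try ring)
  · intro G H
    by_cases hg : g = 0
    · have hh : h ≠ 0 := fun hh => hgh ⟨hg, hh⟩
      refine ⟨![0,0,0,0,0,0, -G/(2*h), -H/(2*h), 0], ?_⟩
      rw [Matrix.mulVecLin_apply, key]
      have h1 : -2*h*(-G/(2*h)) + 2*g*(-H/(2*h)) = G := by
        subst hg; field_simp; ring
      have h2 : -2*h*(-H/(2*h)) + 2*g*(0:ℝ) = H := by
        subst hg; field_simp; ring
      rw [h1, h2]
    · refine ⟨![0,0,0,0,0,0, 0, G/(2*g), (H + h*G/g)/(2*g)], ?_⟩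
      rw [Matrix.mulVecLin_apply, key]
      have h1 : -2*h*(0:ℝ) + 2*g*(G/(2*g)) = G := by field_simp; ring
      have h2 : -2*h*(G/(2*g)) + 2*g*((H + h*G/g)/(2*g)) = H := by
        field_simp; ring
      rw [h1, h2]
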